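/- Let α be an odd positive integer, p an odd prime dividing α, and write α = p^r·α' with gcd(α', p) = 1. Then Φ_α(x) ≡ (x-2)^{(p^r - 1)/2} · Φ_{α'}(x)^{p^r} mod p, where Φ_α ∈ ℤ[x] satisfies Φ_α(λ + 1/λ) = (λ^α - 1)/(λ - 1)·λ^{(1-α)/2}. -/

import Mathlib

open Polynomial

noncomputable def TT {R : Type*} [CommRing R] (n : ℕ) (P : R[X]) : R[X] :=
  ∑ i ∈ Finset.range (n + 1), C (P.coeff i) * (X ^ 2 + 1) ^ i * X ^ (n - i)

theorem TT_map {R S : Type*} [CommRing R] [CommRing S] (f : R →+* S) (n : ℕ) (P : R[X]) :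
    (TT n P).map f = TT n (P.map f) := by
  unfold TT
  rw [Polynomial.map_sum]
  refine Finset.sum_congr rfl fun i _ => ?_
  simp [Polynomial.map_mul, Polynomial.map_pow, Polynomial.map_add, coeff_map]

theorem TT_eval {S : Type*} [Field S] (P : S[X]) (n : ℕ) (hn : P.natDegree ≤ n)
    (l : S) (hl : l ≠ 0) : (TT n P).eval l = l ^ n * P.eval (l + l⁻¹) := by
  rw [eval_eq_sum_range' (Nat.lt_succ_of_le hn) (l + l⁻¹), TT, eval_finset_sum, Finset.mul_sum]
  refine Finset.sum_congr rfl fun i hi => ?_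
  rw [Finset.mem_range, Nat.lt_succ_iff] at hi
  have h1 : l + l⁻¹ = (l ^ 2 + 1) / l := by field_simp
  rw [h1]
  simp only [eval_mul, eval_pow, eval_C, eval_add, eval_X, eval_one]
  rw [div_pow, ← pow_sub_mul_pow l hi]
  field_simp

theorem TT_coeff {S : Type*} [CommRing S] [Nontrivial S] (P : S[X]) :
    (TT P.natDegree P).coeff (2 * P.natDegree) = P.leadingCoeff := by
  set d := P.natDegree with hd
  have hmon : ((X : S[X]) ^ 2 + 1).Monic := by
    apply monic_X_pow_add
    rw [degree_one]
    exact_mod_cast by norm_num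
  have hnd : ((X : S[X]) ^ 2 + 1).natDegree = 2 := by
    have : ((X : S[X]) ^ 2 + C 1).natDegree = 2 := natDegree_X_pow_add_C
    simpa using this
  rw [TT, finset_sum_coeff, Finset.sum_eq_single d]
  · rw [Nat.sub_self, pow_zero, mul_one, coeff_C_mul]
    have h2 : (((X : S[X]) ^ 2 + 1) ^ d).natDegree = d * 2 := by
      rw [hmon.natDegree_pow, hnd]
    have h3 : (((X : S[X]) ^ 2 + 1) ^ d).coeff (2 * d) = 1 := by
      have := (hmon.pow d).coeff_natDegree
      rwa [h2, Nat.mul_comm] at this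
    rw [h3, mul_one, leadingCoeff]
  · intro i hi hne
    rw [Finset.mem_range, Nat.lt_succ_iff] at hi
    have hlt : i < d := lt_of_le_of_ne hi hne
    apply coeff_eq_zero_of_natDegree_lt
    calc (C (P.coeff i) * (X ^ 2 + 1) ^ i * X ^ (d - i)).natDegree
        ≤ (C (P.coeff i) * (X ^ 2 + 1) ^ i).natDegree + (X ^ (d - i) : S[X]).natDegree :=
          natDegree_mul_le
      _ ≤ ((C (P.coeff i)).natDegree + ((X ^ 2 + 1 : S[X]) ^ i).natDegree) + (d - i) := by
          rw [natDegree_X_pow]; exact Nat.add_le_add_right natDegree_mul_le _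
      _ ≤ (0 + i * 2) + (d - i) := by
          apply Nat.add_le_add_right
          apply add_le_add (natDegree_C _).le
          exact natDegree_pow_le.trans (by rw [hnd])
      _ < 2 * d := by omega
  · intro h
    exact absurd (Finset.self_mem_range_succ d) h

theorem key (m : ℕ) (hm : Odd m) (P : Polynomial ℤ)
    (hP : ∀ l : ℂ, l ≠ 0 →
      (Polynomial.aeval (l + l⁻¹)) P * (l - 1) = (l ^ m - 1) * l ^ ((1 - (m : ℤ)) / 2)) :
    TT P.natDegree P * (X - 1) * X ^ ((m - 1) / 2) = (X ^ m - 1) * X ^ P.natDegree := by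
  obtain ⟨c, hc⟩ := hm
  have hmc : (m - 1) / 2 = c := by omega
  rw [hmc]
  apply map_injective (Int.castRingHom ℂ) Int.cast_injective
  have hinf : ({(0 : ℂ)}ᶜ : Set ℂ).Infinite := (Set.finite_singleton 0).infinite_compl
  apply eq_of_infinite_eval_eq
  apply hinf.mono
  intro l hl
  have hl0 : l ≠ 0 := hl
  simp only [Set.mem_setOf_eq, Polynomial.map_mul, Polynomial.map_pow, Polynomial.map_sub,
    Polynomial.map_one, map_X, eval_mul, eval_pow, eval_sub, eval_one, eval_X]
  rw [TT_map, TT_eval _ _ natDegree_map_le l hl0]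
  have h2 := hP l hl0
  have haev : (Polynomial.aeval (l + l⁻¹)) P = (P.map (Int.castRingHom ℂ)).eval (l + l⁻¹) := by
    rw [aeval_def, eval_map, algebraMap_int_eq]
  rw [haev] at h2
  have hz : (1 - (m : ℤ)) / 2 = -(c : ℤ) := by omega
  rw [hz, zpow_neg, zpow_natCast] at h2
  have hlc : (l : ℂ) ^ c ≠ 0 := pow_ne_zero _ hl0
  have h2 : (P.map (Int.castRingHom ℂ)).eval (l + l⁻¹) * (l - 1) * l ^ c = l ^ m - 1 := by
    rw [h2]; field_simp
  calc l ^ P.natDegree * (P.map (Int.castRingHom ℂ)).eval (l + l⁻¹) * (l - 1) * l ^ c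
      = ((P.map (Int.castRingHom ℂ)).eval (l + l⁻¹) * (l - 1) * l ^ c) * l ^ P.natDegree := by
        ring
    _ = (l ^ m - 1) * l ^ P.natDegree := by rw [h2]

set_option maxHeartbeats 1000000 in
theorem stmt13 (α : ℕ) (hα : 0 < α) (hαodd : Odd α)
    (p : ℕ) (hp : p.Prime) (hpodd : p ≠ 2) (hpdvd : p ∣ α)
    (r α' : ℕ) (hr : 1 ≤ r) (hcop : Nat.Coprime α' p) (hfact : α = p ^ r * α')
    (Φα Φα' : Polynomial ℤ)
    (hΦα : ∀ l : ℂ, l ≠ 0 →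
      (Polynomial.aeval (l + l⁻¹)) Φα * (l - 1) = (l ^ α - 1) * l ^ ((1 - (α : ℤ)) / 2))
    (hΦα' : ∀ l : ℂ, l ≠ 0 →
      (Polynomial.aeval (l + l⁻¹)) Φα' * (l - 1) = (l ^ α' - 1) * l ^ ((1 - (α' : ℤ)) / 2)) :
    Φα.map (Int.castRingHom (ZMod p)) =
      (X - 2) ^ ((p ^ r - 1) / 2) * (Φα'.map (Int.castRingHom (ZMod p))) ^ (p ^ r) := by
  haveI : Fact p.Prime := ⟨hp⟩
  obtain ⟨k, hk⟩ : Odd (p ^ r) := (hp.odd_of_ne_two hpodd).pow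
  have hα'odd : Odd α' := by
    rcases Nat.even_or_odd α' with he | ho
    · exfalso
      have hev : Even α := by rw [hfact]; exact he.mul_left (p ^ r)
      exact (Nat.not_odd_iff_even.mpr hev) hαodd
    · exact ho
  obtain ⟨m', hm'⟩ := hα'odd
  have hα'odd : Odd α' := ⟨m', hm'⟩
  set K := RatFunc (ZMod p) with hK
  haveI : CharP K p := charP_of_injective_algebraMap (algebraMap (ZMod p) K).injective p
  set ψ : ZMod p →+* K := algebraMap (ZMod p) K with hψ
  set t : K := RatFunc.X with htdef
  have ht0 : t ≠ 0 := RatFunc.X_ne_zero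
  have ht1 : t - 1 ≠ 0 := by
    rw [sub_ne_zero]
    intro h
    have hX1 : (X : (ZMod p)[X]) = 1 := by
      apply RatFunc.algebraMap_injective (ZMod p)
      rw [map_one, RatFunc.algebraMap_X]
      exact h
    have := congrArg natDegree hX1
    simp at this
  -- main transfer lemma
  have main : ∀ (m : ℕ), Odd m → ∀ P : Polynomial ℤ,
      (∀ l : ℂ, l ≠ 0 →
        (Polynomial.aeval (l + l⁻¹)) P * (l - 1) = (l ^ m - 1) * l ^ ((1 - (m : ℤ)) / 2)) →
      (((P.map (Int.castRingHom (ZMod p))).map ψ).eval (t + t⁻¹)) * (t - 1) * t ^ ((m - 1) / 2)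
        = t ^ m - 1 := by
    intro m hm P hP
    have hkey := key m hm P hP
    have hthis := congrArg
      (fun Q : Polynomial ℤ => (Q.map (ψ.comp (Int.castRingHom (ZMod p)))).eval t) hkey
    simp only [Polynomial.map_mul, Polynomial.map_pow, Polynomial.map_sub, Polynomial.map_one,
      map_X, eval_mul, eval_pow, eval_sub, eval_one, eval_X] at hthis
    rw [TT_map, TT_eval _ _ natDegree_map_le t ht0, ← Polynomial.map_map] at hthis
    have htn : t ^ P.natDegree ≠ 0 := pow_ne_zero _ ht0
    apply mul_right_cancel₀ htn
    calc (((P.map (Int.castRingHom (ZMod p))).map ψ).eval (t + t⁻¹)) * (t - 1)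
          * t ^ ((m - 1) / 2) * t ^ P.natDegree
        = t ^ P.natDegree * (((P.map (Int.castRingHom (ZMod p))).map ψ).eval (t + t⁻¹))
          * (t - 1) * t ^ ((m - 1) / 2) := by ring
      _ = (t ^ m - 1) * t ^ P.natDegree := hthis
  set Pα := Φα.map (Int.castRingHom (ZMod p)) with hPα
  set Pα' := Φα'.map (Int.castRingHom (ZMod p)) with hPα'
  set u := (Pα.map ψ).eval (t + t⁻¹) with hu
  set u' := (Pα'.map ψ).eval (t + t⁻¹) with hu'
  have h1 := main α hαodd Φα hΦα
  have h2 := main α' hα'odd Φα' hΦα'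
  -- nat arithmetic
  have hα2 : α = 2 * ((p ^ r) * m' + k) + 1 := by
    have hh : α = p ^ r * (2 * m' + 1) := by rw [hfact, hm']
    rw [hh, hk]; ring
  have hma : (α - 1) / 2 = (p ^ r) * m' + k := by
    rw [hα2]; generalize p ^ r * m' + k = e; omega
  have hma' : (α' - 1) / 2 = m' := by omega
  have hkk : (p ^ r - 1) / 2 = k := by rw [hk]; omega
  rw [hma, ← hu] at h1
  rw [hma', ← hu'] at h2
  -- frobenius
  have hfrob : t ^ α - 1 = (t ^ α' - 1) ^ (p ^ r) := by
    have hpow : t ^ α = (t ^ α') ^ (p ^ r) := by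
      rw [hfact, mul_comm, pow_mul]
    rw [hpow, sub_pow_char_pow, one_pow]
  -- key value identity
  have huval : u = (t + t⁻¹ - 2) ^ k * u' ^ (p ^ r) := by
    have hcancel : (t - 1) * (t ^ ((p ^ r) * m' + k) * t ^ k) ≠ 0 :=
      mul_ne_zero ht1 (mul_ne_zero (pow_ne_zero _ ht0) (pow_ne_zero _ ht0))
    apply mul_right_cancel₀ hcancel
    have e1 : u * ((t - 1) * (t ^ ((p ^ r) * m' + k) * t ^ k)) = (t ^ α - 1) * t ^ k := by
      rw [← h1]; ring
    rw [e1, hfrob, ← h2, hk]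
    have hs2 : (t + t⁻¹ - 2) * t = (t - 1) ^ 2 := by rw [sub_mul, add_mul, inv_mul_cancel₀ ht0]; ring
    have hrw : (t + t⁻¹ - 2) ^ k * t ^ k = (t - 1) ^ (2 * k) := by
      rw [← mul_pow, hs2, ← pow_mul]
    have hexp : t ^ ((2 * k + 1) * m' + k) = (t ^ m') ^ (2 * k + 1) * t ^ k := by
      rw [pow_add, mul_comm (2 * k + 1) m', pow_mul]
    calc (u' * (t - 1) * t ^ m') ^ (2 * k + 1) * t ^ k
        = u' ^ (2 * k + 1) * ((t - 1) ^ (2 * k) * (t - 1)) * (t ^ m') ^ (2 * k + 1) * t ^ k := by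
          rw [mul_pow, mul_pow, pow_succ, pow_mul]; ring
      _ = u' ^ (2 * k + 1) * (((t + t⁻¹ - 2) ^ k * t ^ k) * (t - 1)) * (t ^ m') ^ (2 * k + 1)
            * t ^ k := by rw [hrw]
      _ = (t + t⁻¹ - 2) ^ k * u' ^ (2 * k + 1) * ((t - 1) * (t ^ ((2 * k + 1) * m' + k) * t ^ k)) := by
          rw [hexp]; ring
  -- conclude
  rw [hkk]
  have hsub : Pα - (X - 2) ^ k * Pα' ^ (p ^ r) = 0 := by
    by_contra hne
    set Dp := Pα - (X - 2) ^ k * Pα' ^ (p ^ r) with hDp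
    have hlead : Dp.leadingCoeff ≠ 0 := leadingCoeff_ne_zero.mpr hne
    have hTTne : TT Dp.natDegree Dp ≠ 0 := by
      intro h0
      rw [← TT_coeff Dp, h0, coeff_zero] at hlead
      exact hlead rfl
    -- evaluate
    have hs0 : ((Dp.map ψ)).eval (t + t⁻¹) = 0 := by
      rw [hDp]
      simp only [Polynomial.map_sub, Polynomial.map_mul, Polynomial.map_pow, map_X,
        Polynomial.map_ofNat, eval_sub, eval_mul, eval_pow, eval_X, eval_ofNat]
      rw [← hu, ← hu', huval]
      ring
    have heval := TT_eval (Dp.map ψ) Dp.natDegree natDegree_map_le t ht0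
    rw [hs0, mul_zero, ← TT_map] at heval
    have halg : ((TT Dp.natDegree Dp).map ψ).eval t
        = algebraMap ((ZMod p)[X]) K (TT Dp.natDegree Dp) := by
      have h5 : (aeval ((IsScalarTower.toAlgHom (ZMod p) ((ZMod p)[X]) K) X))
            (TT Dp.natDegree Dp)
          = (IsScalarTower.toAlgHom (ZMod p) ((ZMod p)[X]) K)
            ((aeval X) (TT Dp.natDegree Dp)) :=
        aeval_algHom_apply _ X _
      rw [aeval_X_left_apply, IsScalarTower.toAlgHom_apply, IsScalarTower.toAlgHom_apply,
        RatFunc.algebraMap_X] at h5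
      rw [← h5, aeval_def, eval_map]
    rw [halg] at heval
    have : TT Dp.natDegree Dp = 0 := by
      apply RatFunc.algebraMap_injective (ZMod p)
      rw [heval, map_zero]
    exact hTTne this
  have := sub_eq_zero.mp hsub
  exact this
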